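/- Let f ∈ ℝ[ω₁,v₁,…,ω_k,v_k] be a k-fold invariant of the adjoint action of SE(3). Then for any two pairs (R₁,T₁) and (R₂,T₂) with Rₘ·Rₘᵀ = I, det Rₘ = −1, and Tₘ skew-symmetric (m = 1,2), the two polynomials obtained by substituting (ωᵢ,vᵢ) ↦ (Rₘωᵢ, TₘRₘωᵢ + Rₘvᵢ) into f coincide: f(R₁ω₁, T₁R₁ω₁+R₁v₁, …, R₁ω_k, T₁R₁ω_k+R₁v_k) = f(R₂ω₁, T₂R₂ω₁+R₂v₁, …, R₂ω_k, T₂R₂ω_k+R₂v_k) for all (ω₁,v₁,…,ω_k,v_k). -/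
import Mathlib


open Matrix MvPolynomial

/-- Evaluate a polynomial in the `6k` twist variables at `k` twists `(ωᵢ, vᵢ)`;
the variable `(i, false, r)` is the `r`-th coordinate of `ωᵢ` and `(i, true, r)` the
`r`-th coordinate of `vᵢ`. -/
noncomputable def evalT {k : ℕ} (f : MvPolynomial (Fin k × Bool × Fin 3) ℝ)
    (ω v : Fin k → Fin 3 → ℝ) : ℝ :=
  MvPolynomial.eval (fun p => if p.2.1 then v p.1 p.2.2 else ω p.1 p.2.2) f

/-- `f` is a `k`-fold invariant of the adjoint action of `SE(3)`:
`(ωᵢ, vᵢ) ↦ (Aωᵢ, TAωᵢ + Avᵢ)` for `A·Aᵀ = I`, `det A = 1`, `T` skew-symmetric. -/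
def IsSE3Invariant {k : ℕ} (f : MvPolynomial (Fin k × Bool × Fin 3) ℝ) : Prop :=
  ∀ (A T : Matrix (Fin 3) (Fin 3) ℝ), A * Aᵀ = 1 → A.det = 1 → Tᵀ = -T →
    ∀ ω v : Fin k → Fin 3 → ℝ,
      evalT f (fun i => A.mulVec (ω i))
        (fun i => T.mulVec (A.mulVec (ω i)) + A.mulVec (v i)) = evalT f ω v

/-- If `f` is a `k`-fold invariant of the adjoint action of `SE(3)`, then the substitution
of any two elements of `E⁻(3)` (orthogonal part of determinant `-1`) into `f` gives the
same polynomial function. -/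
theorem SE3_invariant_Eminus_welldefined {k : ℕ}
    (f : MvPolynomial (Fin k × Bool × Fin 3) ℝ) (hf : IsSE3Invariant f)
    (R₁ T₁ R₂ T₂ : Matrix (Fin 3) (Fin 3) ℝ)
    (hR₁ : R₁ * R₁ᵀ = 1) (hdet₁ : R₁.det = -1) (hT₁ : T₁ᵀ = -T₁)
    (hR₂ : R₂ * R₂ᵀ = 1) (hdet₂ : R₂.det = -1) (hT₂ : T₂ᵀ = -T₂) :
    ∀ ω v : Fin k → Fin 3 → ℝ,
      evalT f (fun i => R₁.mulVec (ω i))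
          (fun i => T₁.mulVec (R₁.mulVec (ω i)) + R₁.mulVec (v i))
        = evalT f (fun i => R₂.mulVec (ω i))
          (fun i => T₂.mulVec (R₂.mulVec (ω i)) + R₂.mulVec (v i)) := by
  intro ω v
  have h1t : R₁ᵀ * R₁ = 1 := mul_eq_one_comm.mp hR₁
  have h2t : R₂ᵀ * R₂ = 1 := mul_eq_one_comm.mp hR₂
  set A : Matrix (Fin 3) (Fin 3) ℝ := R₂ * R₁ᵀ with hA
  set S : Matrix (Fin 3) (Fin 3) ℝ := T₂ - A * T₁ * Aᵀ with hSdef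
  have hAO : A * Aᵀ = 1 := by
    have h : A * Aᵀ = R₂ * (R₁ᵀ * R₁) * R₂ᵀ := by
      simp only [hA, transpose_mul, transpose_transpose, Matrix.mul_assoc]
    rw [h, h1t, Matrix.mul_one, hR₂]
  have hdetA : A.det = 1 := by
    simp [hA, det_mul, det_transpose, hdet₁, hdet₂]
  have hS : Sᵀ = -S := by
    have h : (A * T₁ * Aᵀ)ᵀ = -(A * T₁ * Aᵀ) := by
      simp only [transpose_mul, transpose_transpose, hT₁, Matrix.mul_neg,
        Matrix.neg_mul, Matrix.mul_assoc]
    simp only [hSdef, transpose_sub, hT₂, h, neg_sub, sub_neg_eq_add]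
    abel
  have hAR : A * R₁ = R₂ := by
    rw [hA, Matrix.mul_assoc, h1t, Matrix.mul_one]
  have hAtR : Aᵀ * R₂ = R₁ := by
    rw [hA, transpose_mul, transpose_transpose, Matrix.mul_assoc, h2t, Matrix.mul_one]
  have hmat : S * R₂ + A * (T₁ * R₁) = T₂ * R₂ := by
    rw [hSdef, Matrix.sub_mul, Matrix.mul_assoc (A * T₁), hAtR, Matrix.mul_assoc]
    exact sub_add_cancel _ _
  have key := hf A S hAO hdetA hS (fun i => R₁.mulVec (ω i))
      (fun i => T₁.mulVec (R₁.mulVec (ω i)) + R₁.mulVec (v i))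
  rw [← key]
  congr 1
  · funext i
    rw [mulVec_mulVec, hAR]
  · funext i
    simp only [Matrix.mulVec_mulVec, Matrix.mulVec_add, Matrix.mul_assoc]
    rw [hAR, ← add_assoc, ← Matrix.add_mulVec, hmat]
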